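/- Let T be a tree with at least one edge and edge set E. For x ∈ ℤ^E and α ∈ ℤ, one has (x, α) ∈ int(M_T) if and only if 1 ≤ x_e ≤ α − 1 for every e ∈ E. -/

import Mathlib

/-! Basic definitions for cut monoids of finite simple graphs. -/

open Classical in
/-- The cut vector of a vertex set `A`, as a function on `Sym2 V`:
value `1` on pairs with exactly one element in `A`, and `0` otherwise. -/
noncomputable def cutVec {V : Type} (A : Set V) : Sym2 V → ℤ :=
  Sym2.lift ⟨fun v w => if ((v ∈ A) ↔ (w ∈ A)) then 0 else 1,
    fun v w => if_congr iff_comm rfl rfl⟩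

variable {V : Type}

/-- The generators `(δ_A, 1)` of the cut monoid of `G`. -/
def cutGens (G : SimpleGraph V) : Set ((G.edgeSet → ℤ) × ℤ) :=
  {p | ∃ A : Set V, p = (fun e => cutVec A e.1, 1)}

/-- The cut monoid `M_G` of a graph `G`. -/
def cutMonoid (G : SimpleGraph V) : AddSubmonoid ((G.edgeSet → ℤ) × ℤ) :=
  AddSubmonoid.closure (cutGens G)

/-- The group `gp(M_G)` generated by the cut monoid. -/
def cutGroup (G : SimpleGraph V) : AddSubgroup ((G.edgeSet → ℤ) × ℤ) :=
  AddSubgroup.closure (cutGens G)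

/-- `M_G` is normal: every `x ∈ gp(M_G)` with `n • x ∈ M_G` for some `n ≥ 1` lies in `M_G`. -/
def CutNormal (G : SimpleGraph V) : Prop :=
  ∀ x ∈ cutGroup G, (∃ n : ℕ, 1 ≤ n ∧ n • x ∈ cutMonoid G) → x ∈ cutMonoid G

/-- `M_G` is seminormal: every `x ∈ gp(M_G)` with `2 • x ∈ M_G` and `3 • x ∈ M_G`
lies in `M_G`. -/
def CutSeminormal (G : SimpleGraph V) : Prop :=
  ∀ x ∈ cutGroup G, 2 • x ∈ cutMonoid G → 3 • x ∈ cutMonoid G → x ∈ cutMonoid G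

/-- Generators of the cone of `M_G`: nonnegative real multiples of the `(δ_A, 1)`. -/
noncomputable def cutConeGens (G : SimpleGraph V) : Set ((G.edgeSet → ℝ) × ℝ) :=
  {q | ∃ (c : ℝ) (A : Set V), 0 ≤ c ∧
    q = c • ((fun e => ((cutVec A e.1 : ℤ) : ℝ), (1 : ℝ)))}

/-- The cone `cone(M_G)`: all finite nonnegative real combinations of the `(δ_A, 1)`. -/
noncomputable def cutCone (G : SimpleGraph V) : Set ((G.edgeSet → ℝ) × ℝ) :=
  (AddSubmonoid.closure (cutConeGens G) : Set ((G.edgeSet → ℝ) × ℝ))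

/-- The canonical map from `ℤ^E × ℤ` to `ℝ^E × ℝ`. -/
noncomputable def toRealCut (G : SimpleGraph V) (p : (G.edgeSet → ℤ) × ℤ) :
    (G.edgeSet → ℝ) × ℝ :=
  (fun e => ((p.1 e : ℤ) : ℝ), ((p.2 : ℤ) : ℝ))

/-- `int(M_G)`: elements of `M_G` mapping into the topological interior of `cone(M_G)`. -/
noncomputable def cutInterior (G : SimpleGraph V) : Set ((G.edgeSet → ℤ) × ℤ) :=
  {p | p ∈ cutMonoid G ∧ toRealCut G p ∈ interior (cutCone G)}

/-- The set of last coordinates `α ∈ ℕ` realized by elements of `int(M_G)`;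
its least element is `m(G)`. -/
noncomputable def cutDegrees (G : SimpleGraph V) : Set ℕ :=
  {α | ∃ x : G.edgeSet → ℤ, ((x, (α : ℤ)) : (G.edgeSet → ℤ) × ℤ) ∈ cutInterior G}

/-- `H` is a minor of `G`: branch sets `B u` are nonempty, pairwise disjoint,
induce connected subgraphs, and edges of `H` are witnessed by edges of `G`. -/
def GraphMinor {W V : Type} (H : SimpleGraph W) (G : SimpleGraph V) : Prop :=
  ∃ B : W → Set V,
    (∀ u, (B u).Nonempty) ∧
    (∀ u v, u ≠ v → Disjoint (B u) (B v)) ∧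
    (∀ u, (G.induce (B u)).Connected) ∧
    (∀ u v, H.Adj u v → ∃ a ∈ B u, ∃ b ∈ B v, G.Adj a b)

/-- `G` is `K₅`-minor-free. -/
def K5Free (G : SimpleGraph V) : Prop :=
  ¬ GraphMinor (⊤ : SimpleGraph (Fin 5)) G

/-- `G` is bipartite: vertices split into two parts so every edge joins the parts. -/
def BipartiteG (G : SimpleGraph V) : Prop :=
  ∃ s : Set V, ∀ ⦃v w⦄, G.Adj v w → ((v ∈ s ∧ w ∉ s) ∨ (w ∈ s ∧ v ∉ s))

/-- `G` has an induced cycle of length `n` (n ≥ 3): an induced-subgraph copy of the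
cycle graph of length `n`. -/
def HasInducedCycleLen (G : SimpleGraph V) (n : ℕ) : Prop :=
  3 ≤ n ∧ Nonempty (SimpleGraph.cycleGraph n ↪g G)

/-- `G` contains a triangle. -/
def HasTriangle (G : SimpleGraph V) : Prop :=
  ∃ a b c, G.Adj a b ∧ G.Adj b c ∧ G.Adj a c

/-- `G` is chordal: every induced cycle is a triangle. -/
def ChordalG (G : SimpleGraph V) : Prop :=
  ∀ n, HasInducedCycleLen G n → n = 3

/-- `G` is bridgeless: every edge lies on some cycle. -/
def BridgelessG (G : SimpleGraph V) : Prop :=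
  ∀ e ∈ G.edgeSet, ∃ (v : V) (c : G.Walk v v), c.IsCycle ∧ e ∈ c.edges

/-- `G` is (isomorphic to) a cycle of length `n`. -/
def IsCycleOfLen (G : SimpleGraph V) (n : ℕ) : Prop :=
  3 ≤ n ∧ Nonempty (G ≃g SimpleGraph.cycleGraph n)

/-- `G` is a cycle. -/
def IsCycleGraph (G : SimpleGraph V) : Prop :=
  ∃ n, IsCycleOfLen G n

/-- `G` is a `0`-sum of `G1` and `G2`: copies of `G1`, `G2` cover `G`,
overlap in exactly one vertex, and every edge comes from `G1` or `G2`. -/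
def IsZeroSumDecomp {V1 V2 : Type} (G : SimpleGraph V) (G1 : SimpleGraph V1)
    (G2 : SimpleGraph V2) : Prop :=
  ∃ (f1 : V1 ↪ V) (f2 : V2 ↪ V),
    Set.range f1 ∪ Set.range f2 = Set.univ ∧
    (∃ v, Set.range f1 ∩ Set.range f2 = {v}) ∧
    (∀ a b, G.Adj a b ↔
      ((∃ x y, f1 x = a ∧ f1 y = b ∧ G1.Adj x y) ∨
       (∃ x y, f2 x = a ∧ f2 y = b ∧ G2.Adj x y)))

/-- `G` is a `1`-sum of `G1` and `G2` along a common edge. -/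
def IsOneSumDecomp {V1 V2 : Type} (G : SimpleGraph V) (G1 : SimpleGraph V1)
    (G2 : SimpleGraph V2) : Prop :=
  ∃ (f1 : V1 ↪ V) (f2 : V2 ↪ V) (v w : V),
    v ≠ w ∧
    Set.range f1 ∪ Set.range f2 = Set.univ ∧
    Set.range f1 ∩ Set.range f2 = {v, w} ∧
    (∃ x y, f1 x = v ∧ f1 y = w ∧ G1.Adj x y) ∧
    (∃ x y, f2 x = v ∧ f2 y = w ∧ G2.Adj x y) ∧
    (∀ a b, G.Adj a b ↔
      ((∃ x y, f1 x = a ∧ f1 y = b ∧ G1.Adj x y) ∨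
       (∃ x y, f2 x = a ∧ f2 y = b ∧ G2.Adj x y)))

/-- Ring graphs: obtained, up to adding isolated vertices, from finitely many
(finite) trees and cycles by iterated `0`-sums and `1`-sums. -/
inductive IsRingGraph : {V : Type} → SimpleGraph V → Prop
  | tree {V : Type} (G : SimpleGraph V) :
      Finite V → G.Connected → G.IsAcyclic → IsRingGraph G
  | cycle {V : Type} (G : SimpleGraph V) : IsCycleGraph G → IsRingGraph G
  | zeroSum {V1 V2 V : Type} {G1 : SimpleGraph V1} {G2 : SimpleGraph V2}
      {G : SimpleGraph V} :
      IsRingGraph G1 → IsRingGraph G2 → IsZeroSumDecomp G G1 G2 → IsRingGraph G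
  | oneSum {V1 V2 V : Type} {G1 : SimpleGraph V1} {G2 : SimpleGraph V2}
      {G : SimpleGraph V} :
      IsRingGraph G1 → IsRingGraph G2 → IsOneSumDecomp G G1 G2 → IsRingGraph G
  | addIsolated {V W : Type} {G : SimpleGraph V} {H : SimpleGraph W} (f : V ↪ W) :
      IsRingGraph G → (∀ a b, H.Adj a b ↔ ∃ x y, f x = a ∧ f y = b ∧ G.Adj x y) →
      IsRingGraph H

/-- An edge of an induced subgraph is an edge of the ambient graph. -/
lemma induce_edge_mem (G : SimpleGraph V) (s : Set V) (e : Sym2 s)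
    (he : e ∈ (G.induce s).edgeSet) : e.map Subtype.val ∈ G.edgeSet := by
  induction e using Sym2.ind with
  | _ a b =>
    rw [Sym2.map_pair_eq, SimpleGraph.mem_edgeSet]
    exact he

/-- Restriction of a vector indexed by the edges of `G` to the edges of the
subgraph of `G` induced on `s`. -/
noncomputable def restrictCut (G : SimpleGraph V) (s : Set V) (p : G.edgeSet → ℤ) :
    (G.induce s).edgeSet → ℤ :=
  fun e => p ⟨e.1.map Subtype.val, induce_edge_mem G s e.1 e.2⟩


section CutAux

open Classical in
lemma cutVec_pair {V : Type} (A : Set V) (v w : V) :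
    cutVec A s(v, w) = if ((v ∈ A) ↔ (w ∈ A)) then 0 else 1 := by
  simp [cutVec]

lemma cutVec_zero_or_one {V : Type} (A : Set V) (e : Sym2 V) :
    cutVec A e = 0 ∨ cutVec A e = 1 := by
  induction e using Sym2.ind with
  | _ v w =>
    rw [cutVec_pair]
    split <;> simp

lemma cutVec_empty {V : Type} (e : Sym2 V) : cutVec (∅ : Set V) e = 0 := by
  induction e using Sym2.ind with
  | _ v w => rw [cutVec_pair]; simp

open Classical in
lemma exists_cut_eq {V : Type} (T : SimpleGraph V) (hconn : T.Connected)
    (hacyc : T.IsAcyclic) (y : T.edgeSet → ℤ) (hy : ∀ e, y e = 0 ∨ y e = 1) :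
    ∃ A : Set V, ∀ e : T.edgeSet, cutVec A e.1 = y e := by
  have hT : T.IsTree := ⟨hconn, hacyc⟩
  obtain ⟨r⟩ := hconn.nonempty
  set g : Sym2 V → ZMod 2 := fun e =>
    if h : e ∈ T.edgeSet then ((y ⟨e, h⟩ : ℤ) : ZMod 2) else 0 with hg
  choose p hp hup using fun w => hT.existsUnique_path r w
  set f : V → ZMod 2 := fun v => ((p v).edges.map g).sum with hf
  have key : ∀ v w (h : T.Adj v w), f w = f v + g s(v, w) := by
    intro v w h
    have addself : ∀ a b : ZMod 2, a + b + b = a := by decide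
    by_cases hm : w ∈ (p v).support
    · have hd : ((p v).dropUntil w hm).IsPath := (hp v).dropUntil hm
      have ht : ((p v).takeUntil w hm).IsPath := (hp v).takeUntil hm
      have hsingle : ((p v).dropUntil w hm)
          = (SimpleGraph.Path.singleton h.symm : SimpleGraph.Path T w v).1 := by
        have := SimpleGraph.isAcyclic_iff_path_unique.mp hacyc
          ⟨(p v).dropUntil w hm, hd⟩ (SimpleGraph.Path.singleton h.symm)
        exact congrArg Subtype.val this
      have hpw : p w = (p v).takeUntil w hm := ((hup w _ ht)).symm
      have hspec := (p v).take_spec hm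
      have hedges : (p v).edges = ((p v).takeUntil w hm).edges ++ [s(w, v)] := by
        conv_lhs => rw [← hspec]
        rw [SimpleGraph.Walk.edges_append, hsingle]
        rfl
      have hfv : f v = f w + g s(w, v) := by
        simp only [hf, hedges, hpw, List.map_append, List.sum_append]
        simp
      rw [hfv, Sym2.eq_swap]
      rw [addself]
    · have hq : ((p v).concat h).IsPath := by
        rw [← SimpleGraph.Walk.isPath_reverse_iff, SimpleGraph.Walk.reverse_concat]
        rw [SimpleGraph.Walk.cons_isPath_iff]
        refine ⟨(hp v).reverse, ?_⟩
        rw [SimpleGraph.Walk.support_reverse, List.mem_reverse]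
        exact hm
      have hpw : p w = (p v).concat h := (hup w _ hq).symm
      simp only [hf, hpw, SimpleGraph.Walk.edges_concat, List.concat_eq_append,
        List.map_append, List.sum_append]
      simp
  refine ⟨{v | f v = 1}, ?_⟩
  rintro ⟨e, he⟩
  induction e using Sym2.ind with
  | _ v w =>
    have hadj : T.Adj v w := he
    have hk := key v w hadj
    have hgval : g s(v, w) = ((y ⟨s(v, w), he⟩ : ℤ) : ZMod 2) := by
      rw [hg]; simp only []; rw [dif_pos he]
    rcases hy ⟨s(v, w), he⟩ with h0 | h1
    · rw [h0] at hgval ⊢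
      simp only [Int.cast_zero] at hgval
      rw [hgval, add_zero] at hk
      rw [cutVec_pair]
      have : (v ∈ {v | f v = 1}) ↔ (w ∈ {v | f v = 1}) := by
        simp [Set.mem_setOf_eq, hk]
      rw [if_pos this]
    · rw [h1] at hgval ⊢
      simp only [Int.cast_one] at hgval
      rw [hgval] at hk
      rw [cutVec_pair]
      have hne : ¬ ((v ∈ {v | f v = 1}) ↔ (w ∈ {v | f v = 1})) := by
        simp only [Set.mem_setOf_eq, hk]
        have : ∀ a : ZMod 2, ¬(a = 1 ↔ a + 1 = 1) := by decide
        exact this (f v)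
      rw [if_neg hne]

lemma mem_cutMonoid_of_bounds {V : Type} (T : SimpleGraph V) (hconn : T.Connected)
    (hacyc : T.IsAcyclic) :
    ∀ (n : ℕ) (x : T.edgeSet → ℤ), (∀ e, 0 ≤ x e ∧ x e ≤ (n : ℤ)) →
      ((x, (n : ℤ)) : (T.edgeSet → ℤ) × ℤ) ∈ cutMonoid T := by
  intro n
  induction n with
  | zero =>
    intro x hx
    have hx0 : x = 0 := funext fun e => le_antisymm (by exact_mod_cast (hx e).2) (hx e).1
    have : ((x, ((0 : ℕ) : ℤ)) : (T.edgeSet → ℤ) × ℤ) = 0 := by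
      rw [hx0]; rfl
    rw [this]
    exact (cutMonoid T).zero_mem
  | succ n ih =>
    intro x hx
    obtain ⟨A, hA⟩ := exists_cut_eq T hconn hacyc (fun e => if 1 ≤ x e then 1 else 0)
      (fun e => by split <;> simp)
    have hkey : ((x, ((n + 1 : ℕ) : ℤ)) : (T.edgeSet → ℤ) × ℤ)
        = ((fun e => cutVec A e.1, 1) : (T.edgeSet → ℤ) × ℤ)
          + ((fun e => x e - (if 1 ≤ x e then 1 else 0), (n : ℤ)) :
              (T.edgeSet → ℤ) × ℤ) := by
      refine Prod.ext ?_ ?_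
      · funext e
        show x e = cutVec A e.1 + (x e - (if 1 ≤ x e then 1 else 0))
        rw [hA e]; ring
      · show ((n + 1 : ℕ) : ℤ) = 1 + (n : ℤ)
        push_cast; ring
    rw [hkey]
    refine AddSubmonoid.add_mem _ (AddSubmonoid.subset_closure ⟨A, rfl⟩) (ih _ ?_)
    intro e
    have h1 := (hx e).1
    have h2 := (hx e).2
    push_cast at h2
    by_cases h : 1 ≤ x e <;> simp only [h, if_pos, if_neg, if_true, if_false] <;>
      constructor <;> omega

lemma zero_vec_mem_cutCone {V : Type} (T : SimpleGraph V) (r : ℝ) (hr : 0 ≤ r) :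
    (((fun _ => 0 : T.edgeSet → ℝ), r) : (T.edgeSet → ℝ) × ℝ) ∈ cutCone T := by
  apply AddSubmonoid.subset_closure
  refine ⟨r, ∅, hr, ?_⟩
  refine Prod.ext ?_ ?_
  · funext e
    show (0 : ℝ) = r • ((cutVec (∅ : Set V) e.1 : ℤ) : ℝ)
    rw [cutVec_empty]
    simp
  · show r = r • (1 : ℝ)
    simp

open Classical in
lemma mem_cutCone_of_bounds {V : Type} [Fintype V] (T : SimpleGraph V)
    (hconn : T.Connected) (hacyc : T.IsAcyclic) (hedge : T.edgeSet.Nonempty)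
    (x : T.edgeSet → ℝ) (r : ℝ) (hx : ∀ e, 0 ≤ x e ∧ x e ≤ r) :
    ((x, r) : (T.edgeSet → ℝ) × ℝ) ∈ cutCone T := by
  haveI : Fintype T.edgeSet := Fintype.ofFinite _
  obtain ⟨e₀, he₀⟩ := hedge
  suffices H : ∀ (N : ℕ) (x : T.edgeSet → ℝ) (r : ℝ),
      (Finset.univ.filter fun e => x e ≠ 0).card ≤ N →
      (∀ e, 0 ≤ x e ∧ x e ≤ r) → ((x, r) : (T.edgeSet → ℝ) × ℝ) ∈ cutCone T by
    exact H _ x r le_rfl hx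
  intro N
  induction N with
  | zero =>
    intro x r hcard hx
    have hzero : ∀ e, x e = 0 := by
      intro e
      by_contra he
      have hmem : e ∈ Finset.univ.filter fun e => x e ≠ 0 := by simp [he]
      have := Finset.card_pos.mpr ⟨e, hmem⟩
      omega
    have hr : 0 ≤ r := by
      have := (hx ⟨e₀, he₀⟩).2
      rw [hzero] at this
      exact this
    have : x = (fun _ => 0 : T.edgeSet → ℝ) := funext hzero
    rw [this]
    exact zero_vec_mem_cutCone T r hr
  | succ N ih =>
    intro x r hcard hx
    by_cases hS : (Finset.univ.filter fun e => 0 < x e).Nonempty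
    · obtain ⟨e₁, he₁S, hmin⟩ := Finset.exists_min_image _ x hS
      have he₁pos : 0 < x e₁ := by
        simp only [Finset.mem_filter] at he₁S
        exact he₁S.2
      set c := x e₁ with hc
      obtain ⟨A, hA⟩ := exists_cut_eq T hconn hacyc
        (fun e => if 0 < x e then 1 else 0) (fun e => by split <;> simp)
      have hAval : ∀ e : T.edgeSet, ((cutVec A e.1 : ℤ) : ℝ)
          = if 0 < x e then 1 else 0 := by
        intro e; rw [hA e]; split <;> simp
      set x' : T.edgeSet → ℝ := fun e => x e - c * ((cutVec A e.1 : ℤ) : ℝ) with hx'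
      have hcr : c ≤ r := (hx e₁).2
      have hx'val : ∀ e, x' e = x e - c * (if 0 < x e then 1 else 0) := by
        intro e; simp only [hx']; rw [hAval e]
      have hbounds : ∀ e, 0 ≤ x' e ∧ x' e ≤ r - c := by
        intro e
        rw [hx'val e]
        rcases lt_or_ge 0 (x e) with hpos | hle0
        · rw [if_pos hpos]
          have hmle : c ≤ x e := hmin e (by simp [hpos])
          constructor
          · linarith
          · linarith [(hx e).2]
        · have hxe : x e = 0 := le_antisymm hle0 (hx e).1
          rw [if_neg (by linarith)]
          constructor
          · simp [hxe]
          · simp [hxe]; linarith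
      have hx'e₁ : x' e₁ = 0 := by
        rw [hx'val e₁, if_pos he₁pos]; simp [hc]
      have hcard' : (Finset.univ.filter fun e => x' e ≠ 0).card ≤ N := by
        have hsub : (Finset.univ.filter fun e => x' e ≠ 0) ⊆
            (Finset.univ.filter fun e => x e ≠ 0).erase e₁ := by
          intro e he
          simp only [Finset.mem_filter, Finset.mem_univ, true_and] at he
          rw [Finset.mem_erase]
          constructor
          · intro heq; rw [heq] at he; exact he hx'e₁
          · simp only [Finset.mem_filter, Finset.mem_univ, true_and]
            intro hxe
            apply he
            rw [hx'val e, hxe, if_neg (by simp)]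
            ring
        have h1 : e₁ ∈ Finset.univ.filter fun e => x e ≠ 0 := by
          simp [he₁pos.ne', ← hc]
        have := Finset.card_le_card hsub
        rw [Finset.card_erase_of_mem h1] at this
        omega
      have heq : ((x, r) : (T.edgeSet → ℝ) × ℝ)
          = c • (((fun e => ((cutVec A e.1 : ℤ) : ℝ)) : T.edgeSet → ℝ), (1 : ℝ))
            + ((x', r - c) : (T.edgeSet → ℝ) × ℝ) := by
        refine Prod.ext ?_ ?_
        · funext e
          show x e = c • ((cutVec A e.1 : ℤ) : ℝ) + x' e
          rw [hx']
          simp [smul_eq_mul]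
        · show r = c • (1 : ℝ) + (r - c)
          simp
      rw [heq]
      exact AddSubmonoid.add_mem _
        (AddSubmonoid.subset_closure ⟨c, A, he₁pos.le, rfl⟩)
        (ih x' (r - c) hcard' hbounds)
    · have hzero : ∀ e, x e = 0 := by
        intro e
        rcases lt_or_ge 0 (x e) with hpos | hle0
        · exact absurd ⟨e, by simp [hpos]⟩ hS
        · exact le_antisymm hle0 (hx e).1
      have hr : 0 ≤ r := by
        have := (hx ⟨e₀, he₀⟩).2
        rw [hzero] at this
        exact this
      have : x = (fun _ => 0 : T.edgeSet → ℝ) := funext hzero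
      rw [this]
      exact zero_vec_mem_cutCone T r hr

lemma cutCone_bounds {V : Type} (T : SimpleGraph V) :
    ∀ p ∈ cutCone T, ∀ e, 0 ≤ p.1 e ∧ p.1 e ≤ p.2 := by
  intro p hp
  refine AddSubmonoid.closure_induction ?_ ?_ ?_ hp
  · rintro q ⟨c, A, hc, rfl⟩ e
    have hval : (0 : ℝ) ≤ ((cutVec A e.1 : ℤ) : ℝ) ∧ ((cutVec A e.1 : ℤ) : ℝ) ≤ 1 := by
      rcases cutVec_zero_or_one A e.1 with h | h <;> rw [h] <;> norm_num
    constructor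
    · show 0 ≤ c • ((cutVec A e.1 : ℤ) : ℝ)
      rw [smul_eq_mul]
      exact mul_nonneg hc hval.1
    · show c • ((cutVec A e.1 : ℤ) : ℝ) ≤ c • (1 : ℝ)
      rw [smul_eq_mul, smul_eq_mul, mul_one]
      calc c * ((cutVec A e.1 : ℤ) : ℝ) ≤ c * 1 := by
            exact mul_le_mul_of_nonneg_left hval.2 hc
        _ = c := mul_one c
  · intro e
    constructor <;> simp
  · rintro q s hq hs ihq ihs e
    obtain ⟨h1, h2⟩ := ihq e
    obtain ⟨h3, h4⟩ := ihs e
    constructor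
    · show 0 ≤ q.1 e + s.1 e
      linarith
    · show q.1 e + s.1 e ≤ q.2 + s.2
      linarith

end CutAux

/-- For a tree `T` with at least one edge, `(x, α) ∈ int(M_T)` if and
only if `1 ≤ x_e ≤ α - 1` for every edge `e`. -/
theorem tree_interior_description {V : Type} [Fintype V] (T : SimpleGraph V)
    (hconn : T.Connected) (hacyc : T.IsAcyclic) (hedge : T.edgeSet.Nonempty)
    (x : T.edgeSet → ℤ) (a : ℤ) :
    ((x, a) : (T.edgeSet → ℤ) × ℤ) ∈ cutInterior T ↔
      ∀ e, 1 ≤ x e ∧ x e ≤ a - 1 := by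
    classical
  set O : Set ((T.edgeSet → ℝ) × ℝ) := {p | ∀ e, 0 < p.1 e ∧ p.1 e < p.2} with hO
  have hOopen : IsOpen O := by
    have hOeq : O = ⋂ e : T.edgeSet,
        ({p : (T.edgeSet → ℝ) × ℝ | 0 < p.1 e} ∩ {p | p.1 e < p.2}) := by
      ext p
      simp only [hO, Set.mem_setOf_eq, Set.mem_iInter, Set.mem_inter_iff]
    rw [hOeq]
    refine isOpen_iInter_of_finite fun e => IsOpen.inter ?_ ?_
    · exact isOpen_lt continuous_const ((continuous_apply e).comp continuous_fst)
    · exact isOpen_lt ((continuous_apply e).comp continuous_fst) continuous_snd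
  have hOsub : O ⊆ cutCone T := by
    intro p hp
    have := mem_cutCone_of_bounds T hconn hacyc hedge p.1 p.2
      (fun e => ⟨(hp e).1.le, (hp e).2.le⟩)
    simpa using this
  constructor
  · rintro ⟨hmem, hint⟩ e
    rw [mem_interior_iff_mem_nhds, Metric.mem_nhds_iff] at hint
    obtain ⟨ε, hε, hball⟩ := hint
    have h1 : 0 < ((x e : ℤ) : ℝ) := by
      set q : (T.edgeSet → ℝ) × ℝ :=
        (Function.update (toRealCut T (x, a)).1 e (((x e : ℤ) : ℝ) - ε / 2),
          ((a : ℤ) : ℝ)) with hq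
      have hqball : q ∈ Metric.ball (toRealCut T (x, a)) ε := by
        rw [Metric.mem_ball, Prod.dist_eq]
        apply max_lt
        · have hdle : dist q.1 (toRealCut T (x, a)).1 ≤ ε / 2 := by
            refine (dist_pi_le_iff (by positivity)).2 fun b => ?_
            by_cases hb : b = e
            · subst hb
              rw [hq]
              simp only [Function.update_self]
              rw [Real.dist_eq]
              have : (toRealCut T (x, a)).1 b = ((x b : ℤ) : ℝ) := rfl
              rw [this]
              rw [abs_of_nonpos (by linarith)]
              linarith
            · rw [hq]
              simp only [Function.update_of_ne hb]
              rw [dist_self]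
              positivity
          linarith
        · rw [hq]
          have : (toRealCut T (x, a)).2 = ((a : ℤ) : ℝ) := rfl
          rw [this, dist_self]
          exact hε
      have hqb := cutCone_bounds T q (hball hqball) e
      have hq1 : q.1 e = ((x e : ℤ) : ℝ) - ε / 2 := by
        rw [hq]
        simp only [Function.update_self]
      rw [hq1] at hqb
      linarith [hqb.1]
    have h2 : ((x e : ℤ) : ℝ) < ((a : ℤ) : ℝ) := by
      set q : (T.edgeSet → ℝ) × ℝ :=
        ((toRealCut T (x, a)).1, ((a : ℤ) : ℝ) - ε / 2) with hq
      have hqball : q ∈ Metric.ball (toRealCut T (x, a)) ε := by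
        rw [Metric.mem_ball, Prod.dist_eq]
        apply max_lt
        · rw [hq, dist_self]
          exact hε
        · rw [hq]
          have : (toRealCut T (x, a)).2 = ((a : ℤ) : ℝ) := rfl
          rw [this, Real.dist_eq, abs_of_nonpos (by linarith)]
          linarith
      have hqb := cutCone_bounds T q (hball hqball) e
      have hq1 : q.1 e = ((x e : ℤ) : ℝ) := rfl
      have hq2 : q.2 = ((a : ℤ) : ℝ) - ε / 2 := rfl
      rw [hq1, hq2] at hqb
      linarith [hqb.2]
    have h1' : 0 < x e := by exact_mod_cast h1
    have h2' : x e < a := by exact_mod_cast h2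
    omega
  · intro h
    have h2a : 2 ≤ a := by
      obtain ⟨e₀, he₀⟩ := hedge
      have := h ⟨e₀, he₀⟩
      omega
    constructor
    · have ha : ((a.toNat : ℕ) : ℤ) = a := Int.toNat_of_nonneg (by omega)
      rw [← ha]
      apply mem_cutMonoid_of_bounds T hconn hacyc
      intro e
      have := h e
      rw [ha]
      omega
    · refine interior_maximal hOsub hOopen ?_
      show ∀ e, 0 < (toRealCut T (x, a)).1 e ∧ (toRealCut T (x, a)).1 e
        < (toRealCut T (x, a)).2
      intro e
      have he := h e
      have hx1 : (0 : ℤ) < x e := by omega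
      have hx2 : x e < a := by omega
      constructor
      · show (0 : ℝ) < ((x e : ℤ) : ℝ)
        exact_mod_cast hx1
      · show ((x e : ℤ) : ℝ) < ((a : ℤ) : ℝ)
        exact_mod_cast hx2
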